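/- For every root ξ in the base S, the minor M_ξ is invariant under the adjoint action of the upper unitriangular group N on K[m]. -/

import Mathlib

open scoped Matrix Classical
open MvPolynomial

/-- `Rsum r k = r 0 + ⋯ + r (k-1)`, the partial sum `R_k` of block sizes. -/
def Rsum (r : ℕ → ℕ) (k : ℕ) : ℕ := (Finset.range k).sum r

/-- Index of the diagonal block containing row/column `a` (0-indexed). -/
def blockOf (r : ℕ → ℕ) (s a : ℕ) : ℕ :=
  ((Finset.range s).filter fun k => Rsum r (k + 1) ≤ a).card

/-- The set `M` of roots `(i,j)` of the nilradical `m`. -/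
def Mset (r : ℕ → ℕ) (s n : ℕ) : Finset (Fin n × Fin n) :=
  Finset.univ.filter fun p => blockOf r s (p.1 : ℕ) < blockOf r s (p.2 : ℕ)

/-- `γ' > γ` iff `γ' − γ` is a positive root. -/
def rootGt {n : ℕ} (γ' γ : Fin n × Fin n) : Prop :=
  (γ'.1 = γ.1 ∧ γ.2 < γ'.2) ∨ (γ'.2 = γ.2 ∧ γ'.1 < γ.1)

/-- A base `S` of `M`: pairwise incomparable, and every root of `M ∖ S`
exceeds some element of `S`. -/
def IsBase {n : ℕ} (M S : Finset (Fin n × Fin n)) : Prop :=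
  S ⊆ M ∧
  (∀ ξ ∈ S, ∀ η ∈ S, ξ ≠ η → ¬rootGt ξ η ∧ ¬rootGt η ξ) ∧
  (∀ γ ∈ M, γ ∉ S → ∃ ξ ∈ S, rootGt γ ξ)

/-- `p` is a positive root of the reductive (block-diagonal) part `r`. -/
def inDr (r : ℕ → ℕ) (s : ℕ) {n : ℕ} (p : Fin n × Fin n) : Prop :=
  p.1 < p.2 ∧ blockOf r s (p.1 : ℕ) = blockOf r s (p.2 : ℕ)

/-- The coordinate ring `K[m]`: polynomials in the variables `x_ξ`, `ξ ∈ M`. -/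
abbrev Rpoly (K : Type) [Field K] (r : ℕ → ℕ) (s n : ℕ) : Type :=
  MvPolynomial {p : Fin n × Fin n // p ∈ Mset r s n} K

/-- The formal matrix `𝕏` of variables (zero outside `M`). -/
noncomputable def Xmat (K : Type) [Field K] (r : ℕ → ℕ) (s n : ℕ) :
    Matrix (Fin n) (Fin n) (Rpoly K r s n) :=
  Matrix.of fun i j => if h : (i, j) ∈ Mset r s n then MvPolynomial.X ⟨(i, j), h⟩ else 0

/-- The minor of a matrix on the ordered row set `I` and ordered column set `J`. -/
noncomputable def minorDet {n : ℕ} {A : Type} [CommRing A]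
    (X : Matrix (Fin n) (Fin n) A) (I J : Finset (Fin n)) : A :=
  if h : J.card = I.card then
    Matrix.det (Matrix.of fun p q : Fin I.card =>
      X (I.orderIsoOfFin rfl p).1 (J.orderIsoOfFin h q).1)
  else 0

/-- The minor `M_γ` attached to a root `γ = (a,b)`: rows `ord{a, i₁, …, i_k}`,
columns `ord{j₁, …, j_k, b}`, where `S_γ = {(i,j) ∈ S : i > a, j < b}`. -/
noncomputable def Mminor (K : Type) [Field K] (r : ℕ → ℕ) (s n : ℕ)
    (S : Finset (Fin n × Fin n)) (γ : Fin n × Fin n) : Rpoly K r s n :=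
  minorDet (Xmat K r s n)
    (insert γ.1 ((S.filter fun p => γ.1 < p.1 ∧ p.2 < γ.2).image Prod.fst))
    (insert γ.2 ((S.filter fun p => γ.1 < p.1 ∧ p.2 < γ.2).image Prod.snd))

/-- The polynomial `L_{φ_q}` for an admissible pair `q = (ξ, ξ')`:
`Σ_{α₁+α₂=α_q, α₁,α₂ ∈ Δ⁺_r ∪ {0}} M_{ξ+α₁} M_{α₂+ξ'}`. -/
noncomputable def Lpoly (K : Type) [Field K] (r : ℕ → ℕ) (s n : ℕ)
    (S : Finset (Fin n × Fin n)) (ξ ξ' : Fin n × Fin n) : Rpoly K r s n :=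
  ∑ m ∈ Finset.univ.filter (fun m : Fin n =>
      (m = ξ.2 ∨ inDr r s (ξ.2, m)) ∧ (m = ξ'.1 ∨ inDr r s (m, ξ'.1))),
    Mminor K r s n S (ξ.1, m) * Mminor K r s n S (m, ξ'.2)

/-- The set `Φ` of roots `φ_q = α_q + ξ'` attached to admissible pairs `q = (ξ, ξ')`. -/
noncomputable def PhiSet (r : ℕ → ℕ) (s n : ℕ) (S : Finset (Fin n × Fin n)) :
    Finset (Fin n × Fin n) :=
  ((S ×ˢ S).filter fun q => inDr r s (q.1.2, q.2.1)).image fun q => (q.1.2, q.2.2)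

/-- The adjoint action of `g` on `K[m]`: the substitution `x_ξ ↦ (g⁻¹ 𝕏 g)_ξ`,
so that `(g·f)(x) = f(g⁻¹ x g)`. -/
noncomputable def adjAct (K : Type) [Field K] (r : ℕ → ℕ) (s n : ℕ)
    (g : Matrix (Fin n) (Fin n) K) : Rpoly K r s n →ₐ[K] Rpoly K r s n :=
  MvPolynomial.aeval fun ξ : {p : Fin n × Fin n // p ∈ Mset r s n} =>
    ((g⁻¹).map (fun a => (MvPolynomial.C a : Rpoly K r s n)) * Xmat K r s n *
      g.map (fun a => (MvPolynomial.C a : Rpoly K r s n))) ξ.1.1 ξ.1.2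

/-- Upper unitriangular matrices: the group `N`. -/
def IsUnitriangular {K : Type} [Field K] {n : ℕ} (g : Matrix (Fin n) (Fin n) K) : Prop :=
  (∀ i, g i i = 1) ∧ ∀ i j : Fin n, j < i → g i j = 0

/-- Membership in the unipotent radical `U` of `P`: `g = I + u` with `u ∈ m`. -/
def InU {K : Type} [Field K] (r : ℕ → ℕ) (s n : ℕ) (g : Matrix (Fin n) (Fin n) K) : Prop :=
  (∀ i, g i i = 1) ∧ ∀ i j : Fin n, i ≠ j → (i, j) ∉ Mset r s n → g i j = 0

/-- The subalgebra of `K[m]` of polynomials invariant under the adjoint action of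
all elements of a set `G` of matrices. -/
noncomputable def invariantAlg (K : Type) [Field K] (r : ℕ → ℕ) (s n : ℕ)
    (G : Set (Matrix (Fin n) (Fin n) K)) : Subalgebra K (Rpoly K r s n) where
  carrier := {f | ∀ g ∈ G, adjAct K r s n g f = f}
  mul_mem' := fun ha hb g hg => by rw [map_mul, ha g hg, hb g hg]
  add_mem' := fun ha hb g hg => by rw [map_add, ha g hg, hb g hg]
  algebraMap_mem' := fun c g hg => (adjAct K r s n g).commutes c

/-- `M'`: the roots of `M` with `E_ξ ∈ m²`, i.e. not lying in a superdiagonal block. -/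
def Mprime (r : ℕ → ℕ) (s n : ℕ) : Finset (Fin n × Fin n) :=
  (Mset r s n).filter fun p => blockOf r s (p.1 : ℕ) + 1 < blockOf r s (p.2 : ℕ)

/-- The broad base `T`: roots `ξ ∈ S`, together with roots `ξ ∈ M` such that
`ξ > γ` for some `γ ∈ S` with `x_ξ`, `x_γ` in the same block `X_{i,j}`. -/
noncomputable def Tset (r : ℕ → ℕ) (s n : ℕ) (S : Finset (Fin n × Fin n)) :
    Finset (Fin n × Fin n) :=
  S ∪ (Mset r s n).filter fun ξ => ∃ γ ∈ S, rootGt ξ γ ∧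
    blockOf r s (ξ.1 : ℕ) = blockOf r s (γ.1 : ℕ) ∧
    blockOf r s (ξ.2 : ℕ) = blockOf r s (γ.2 : ℕ)

/-- The invariant `N_ξ`: the variable `x_ξ` for `ξ ∈ M ∖ M'`, the minor `M_ξ` for `ξ ∈ M'`. -/
noncomputable def Npoly (K : Type) [Field K] (r : ℕ → ℕ) (s n : ℕ)
    (S : Finset (Fin n × Fin n)) (ξ : Fin n × Fin n) : Rpoly K r s n :=
  if ξ ∈ Mprime r s n then Mminor K r s n S ξ
  else if h : ξ ∈ Mset r s n then MvPolynomial.X ⟨ξ, h⟩ else 0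

/-- A matrix lies in the nilradical `m`. -/
def memNilrad {K : Type} [Field K] (r : ℕ → ℕ) (s n : ℕ)
    (x : Matrix (Fin n) (Fin n) K) : Prop :=
  ∀ p : Fin n × Fin n, p ∉ Mset r s n → x p.1 p.2 = 0

/-- `W` is a Zariski-open subset of the affine space `m`. -/
def IsZariskiOpenIn (K : Type) [Field K] (r : ℕ → ℕ) (s n : ℕ)
    (W : Set (Matrix (Fin n) (Fin n) K)) : Prop :=
  ∃ I : Set (Rpoly K r s n),
    W = {x | memNilrad r s n x ∧ ∃ f ∈ I,
      MvPolynomial.eval (fun ξ : {p : Fin n × Fin n // p ∈ Mset r s n} => x ξ.1.1 ξ.1.2) f ≠ 0}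

namespace St3
open Finset

variable {n s : ℕ} {r : ℕ → ℕ}

lemma blockOf_mono {a b : ℕ} (h : a ≤ b) : blockOf r s a ≤ blockOf r s b := by
  apply Finset.card_le_card
  intro x hx
  rw [Finset.mem_filter] at hx ⊢
  exact ⟨hx.1, hx.2.trans h⟩

lemma mem_Mset_iff {p : Fin n × Fin n} :
    p ∈ Mset r s n ↔ blockOf r s (p.1 : ℕ) < blockOf r s (p.2 : ℕ) := by
  simp [Mset]

section Base

variable {S : Finset (Fin n × Fin n)} (hS : IsBase (Mset r s n) S)

include hS

lemma S_row_inj {i j j' : Fin n} (h1 : (i, j) ∈ S) (h2 : (i, j') ∈ S) : j = j' := by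
  by_contra hne
  have hne' : ((i, j) : Fin n × Fin n) ≠ (i, j') := by simp [hne]
  have := hS.2.1 _ h1 _ h2 hne'
  rcases lt_or_gt_of_ne hne with h | h
  · exact this.2 (Or.inl ⟨rfl, h⟩)
  · exact this.1 (Or.inl ⟨rfl, h⟩)

lemma S_col_inj {i i' j : Fin n} (h1 : (i, j) ∈ S) (h2 : (i', j) ∈ S) : i = i' := by
  by_contra hne
  have hne' : ((i, j) : Fin n × Fin n) ≠ (i', j) := by simp [hne]
  have := hS.2.1 _ h1 _ h2 hne'
  rcases lt_or_gt_of_ne hne with h | h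
  · exact this.1 (Or.inr ⟨rfl, h⟩)
  · exact this.2 (Or.inr ⟨rfl, h⟩)

lemma S_cover {p : Fin n × Fin n} (hp : p ∈ Mset r s n) :
    (∃ j', (p.1, j') ∈ S ∧ j' ≤ p.2) ∨ (∃ i', (i', p.2) ∈ S ∧ p.1 ≤ i') := by
  by_cases hpS : p ∈ S
  · exact Or.inl ⟨p.2, by simpa using hpS, le_rfl⟩
  · obtain ⟨η, hη, hgt⟩ := hS.2.2 p hp hpS
    rcases hgt with ⟨h1, h2⟩ | ⟨h1, h2⟩
    · exact Or.inl ⟨η.2, by rw [h1]; simpa using hη, le_of_lt h2⟩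
    · exact Or.inr ⟨η.1, by rw [h1]; simpa using hη, le_of_lt h2⟩

end Base

end St3

namespace Box
open Finset

variable {n s : ℕ} {r : ℕ → ℕ}

/-- `S_ξ` as a Finset. -/
def SxiF {n : ℕ} (S : Finset (Fin n × Fin n)) (ξ : Fin n × Fin n) : Finset (Fin n × Fin n) :=
  S.filter fun p => ξ.1 < p.1 ∧ p.2 < ξ.2

def IF {n : ℕ} (S : Finset (Fin n × Fin n)) (ξ : Fin n × Fin n) : Finset (Fin n) :=
  insert ξ.1 ((SxiF S ξ).image Prod.fst)

def JF {n : ℕ} (S : Finset (Fin n × Fin n)) (ξ : Fin n × Fin n) : Finset (Fin n) :=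
  insert ξ.2 ((SxiF S ξ).image Prod.snd)

variable {S : Finset (Fin n × Fin n)} (hS : IsBase (Mset r s n) S)
variable {ξ : Fin n × Fin n} (hξ : ξ ∈ S)

lemma le_of_mem_IF {x : Fin n} (hx : x ∈ IF S ξ) : ξ.1 ≤ x := by
  rcases Finset.mem_insert.mp hx with h | h
  · exact h.ge
  · obtain ⟨p, hp, rfl⟩ := Finset.mem_image.mp h
    exact ((Finset.mem_filter.mp hp).2.1).le

lemma le_of_mem_JF {y : Fin n} (hy : y ∈ JF S ξ) : y ≤ ξ.2 := by
  rcases Finset.mem_insert.mp hy with h | h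
  · exact h.le
  · obtain ⟨p, hp, rfl⟩ := Finset.mem_image.mp h
    exact ((Finset.mem_filter.mp hp).2.2).le

set_option linter.unusedSectionVars false
include hS hξ

lemma cell_mem_IF_JF {x y : Fin n} (hc : (x, y) ∈ S) (hx : ξ.1 ≤ x) (hy : y ≤ ξ.2) :
    x ∈ IF S ξ ∧ y ∈ JF S ξ := by
  rcases eq_or_lt_of_le hx with h | h
  · -- x = ξ.1, then y = ξ.2 by row injectivity
    have hxy : y = ξ.2 := by
      have : ((ξ.1 : Fin n), y) ∈ S := by rwa [← h] at hc
      have := St3.S_row_inj hS this (show (ξ.1, ξ.2) ∈ S by simpa using hξ)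
      exact this
    subst hxy
    exact ⟨Finset.mem_insert.mpr (Or.inl h.symm), Finset.mem_insert.mpr (Or.inl rfl)⟩
  · rcases eq_or_lt_of_le hy with h2 | h2
    · -- y = ξ.2 forces x = ξ.1, contradiction
      exfalso
      have : (x, ξ.2) ∈ S := by rwa [h2] at hc
      have := St3.S_col_inj hS this (show (ξ.1, ξ.2) ∈ S by simpa using hξ)
      exact absurd this.symm (ne_of_lt h)
    · have hmem : (x, y) ∈ SxiF S ξ := Finset.mem_filter.mpr ⟨hc, h, h2⟩
      constructor
      · exact Finset.mem_insert.mpr (Or.inr (Finset.mem_image.mpr ⟨(x, y), hmem, rfl⟩))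
      · exact Finset.mem_insert.mpr (Or.inr (Finset.mem_image.mpr ⟨(x, y), hmem, rfl⟩))

lemma IF_cell {x : Fin n} (hx : x ∈ IF S ξ) :
    ∃ y, (x, y) ∈ S ∧ y ≤ ξ.2 ∧ y ∈ JF S ξ := by
  rcases Finset.mem_insert.mp hx with h | h
  · subst h
    exact ⟨ξ.2, by simpa using hξ, le_rfl, Finset.mem_insert_self _ _⟩
  · obtain ⟨p, hp, rfl⟩ := Finset.mem_image.mp h
    have hp' := Finset.mem_filter.mp hp
    refine ⟨p.2, by simpa using hp'.1, hp'.2.2.le, ?_⟩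
    exact Finset.mem_insert.mpr (Or.inr (Finset.mem_image.mpr ⟨p, hp, rfl⟩))

lemma JF_cell {y : Fin n} (hy : y ∈ JF S ξ) :
    ∃ x, (x, y) ∈ S ∧ ξ.1 ≤ x ∧ x ∈ IF S ξ := by
  rcases Finset.mem_insert.mp hy with h | h
  · subst h
    exact ⟨ξ.1, by simpa using hξ, le_rfl, Finset.mem_insert_self _ _⟩
  · obtain ⟨p, hp, rfl⟩ := Finset.mem_image.mp h
    have hp' := Finset.mem_filter.mp hp
    refine ⟨p.1, by simpa using hp'.1, hp'.2.1.le, ?_⟩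
    exact Finset.mem_insert.mpr (Or.inr (Finset.mem_image.mpr ⟨p, hp, rfl⟩))

lemma card_JF_eq : (JF S ξ).card = (IF S ξ).card := by
  have hIinj : Set.InjOn Prod.fst (SxiF S ξ : Set (Fin n × Fin n)) := by
    intro p hp q hq hpq
    have hp' := Finset.mem_filter.mp (Finset.mem_coe.mp hp)
    have hq' := Finset.mem_filter.mp (Finset.mem_coe.mp hq)
    have h1 : (p.1, p.2) ∈ S := by simpa using hp'.1
    have h2 : (p.1, q.2) ∈ S := by rw [hpq]; simpa using hq'.1
    have := St3.S_row_inj hS h1 h2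
    exact Prod.ext hpq this
  have hJinj : Set.InjOn Prod.snd (SxiF S ξ : Set (Fin n × Fin n)) := by
    intro p hp q hq hpq
    have hp' := Finset.mem_filter.mp (Finset.mem_coe.mp hp)
    have hq' := Finset.mem_filter.mp (Finset.mem_coe.mp hq)
    have h1 : (p.1, p.2) ∈ S := by simpa using hp'.1
    have h2 : (q.1, p.2) ∈ S := by rw [hpq]; simpa using hq'.1
    have := St3.S_col_inj hS h1 h2
    exact Prod.ext this hpq
  have hI : ξ.1 ∉ (SxiF S ξ).image Prod.fst := by
    intro h
    obtain ⟨p, hp, hp2⟩ := Finset.mem_image.mp h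
    exact absurd hp2.symm (ne_of_lt (Finset.mem_filter.mp hp).2.1)
  have hJ : ξ.2 ∉ (SxiF S ξ).image Prod.snd := by
    intro h
    obtain ⟨p, hp, hp2⟩ := Finset.mem_image.mp h
    exact absurd hp2 (ne_of_lt (Finset.mem_filter.mp hp).2.2)
  rw [IF, JF, Finset.card_insert_of_notMem hI, Finset.card_insert_of_notMem hJ,
    Finset.card_image_of_injOn hIinj, Finset.card_image_of_injOn hJinj]

end Box

namespace Core
open Finset

variable {m : ℕ}

lemma no_inj_Ici_Ioi {t : Fin m} {F : Fin m → Fin m}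
    (hmaps : ∀ u ∈ Finset.Ici t, F u ∈ Finset.Ioi t)
    (hinj : Set.InjOn F (Finset.Ici t)) : False := by
  have h1 : (Finset.Ici t).card ≤ (Finset.Ioi t).card :=
    Finset.card_le_card_of_injOn F hmaps hinj
  have h2 : (Finset.Ioi t).card < (Finset.Ici t).card := by
    apply Finset.card_lt_card
    constructor
    · exact Finset.Ioi_subset_Ici_self
    · intro hsub
      have := hsub (Finset.mem_Ici.mpr (le_refl t))
      simp at this
  omega

lemma no_inj_Iic_Iio {t : Fin m} {F : Fin m → Fin m}
    (hmaps : ∀ u ∈ Finset.Iic t, F u ∈ Finset.Iio t)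
    (hinj : Set.InjOn F (Finset.Iic t)) : False := by
  have h1 : (Finset.Iic t).card ≤ (Finset.Iio t).card :=
    Finset.card_le_card_of_injOn F hmaps hinj
  have h2 : (Finset.Iio t).card < (Finset.Iic t).card := by
    apply Finset.card_lt_card
    constructor
    · exact Finset.Iio_subset_Iic_self
    · intro hsub
      have := hsub (Finset.mem_Iic.mpr (le_refl t))
      simp at this
  omega

variable {n s : ℕ} {r : ℕ → ℕ}

lemma bmono {i j : Fin n} (h : i ≤ j) : blockOf r s (i : ℕ) ≤ blockOf r s (j : ℕ) :=
  St3.blockOf_mono (by exact_mod_cast h)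

variable {S : Finset (Fin n × Fin n)} (hS : IsBase (Mset r s n) S)
variable {ξ : Fin n × Fin n} (hξ : ξ ∈ S)
variable {rr cc : Fin m → Fin n}
  (hrmono : StrictMono rr) (hcmono : StrictMono cc)
  (hrmem : ∀ t, rr t ∈ Box.IF S ξ) (hcmem : ∀ t, cc t ∈ Box.JF S ξ)
  (hrsurj : ∀ x ∈ Box.IF S ξ, ∃ t, rr t = x) (hcsurj : ∀ y ∈ Box.JF S ξ, ∃ t, cc t = y)

set_option linter.unusedSectionVars false

include hS hξ hrmono hcmono hrmem hcmem hrsurj hcsurj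

lemma row_block {x : Fin n} (hxI : x ∉ Box.IF S ξ) {t : Fin m} (hxt : rr t < x)
    (hM : blockOf r s (x : ℕ) < blockOf r s (cc t : ℕ)) : False := by
  have step : ∀ u : Fin m, t ≤ u → ∃ w, t < w ∧ (rr w, cc u) ∈ S := by
    intro u hu
    have hMu : ((x, cc u) : Fin n × Fin n) ∈ Mset r s n := by
      rw [St3.mem_Mset_iff]
      exact lt_of_lt_of_le hM (bmono (hcmono.monotone hu))
    rcases St3.S_cover hS hMu with ⟨j', hj'S, hj'le⟩ | ⟨i', hi'S, hxi'⟩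
    · exfalso
      have hx1 : ξ.1 ≤ x := (Box.le_of_mem_IF (hrmem t)).trans hxt.le
      have hy2 : j' ≤ ξ.2 := le_trans hj'le (Box.le_of_mem_JF (hcmem u))
      exact hxI (Box.cell_mem_IF_JF hS hξ hj'S hx1 hy2).1
    · have hx1 : ξ.1 ≤ i' := ((Box.le_of_mem_IF (hrmem t)).trans hxt.le).trans hxi'
      have hy2 : (cc u) ≤ ξ.2 := Box.le_of_mem_JF (hcmem u)
      have hi'I : i' ∈ Box.IF S ξ := (Box.cell_mem_IF_JF hS hξ hi'S hx1 hy2).1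
      obtain ⟨w, rfl⟩ := hrsurj i' hi'I
      refine ⟨w, ?_, hi'S⟩
      exact hrmono.lt_iff_lt.mp (lt_of_lt_of_le hxt hxi')
  classical
  set F : Fin m → Fin m := fun u => if h : t ≤ u then (step u h).choose else u with hF
  apply no_inj_Ici_Ioi (t := t) (F := F)
  · intro u hu
    have h := Finset.mem_Ici.mp hu
    have := (step u h).choose_spec
    simp only [hF, dif_pos h]
    exact Finset.mem_Ioi.mpr this.1
  · intro u₁ hu₁ u₂ hu₂ hFu
    have h₁ := Finset.mem_Ici.mp (Finset.mem_coe.mp hu₁)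
    have h₂ := Finset.mem_Ici.mp (Finset.mem_coe.mp hu₂)
    have s₁ := (step u₁ h₁).choose_spec
    have s₂ := (step u₂ h₂).choose_spec
    simp only [hF, dif_pos h₁, dif_pos h₂] at hFu
    rw [hFu] at s₁
    exact hcmono.injective (St3.S_row_inj hS s₁.2 s₂.2)

lemma col_block {y : Fin n} (hyJ : y ∉ Box.JF S ξ) {t : Fin m} (hyt : y < cc t)
    (hM : blockOf r s (rr t : ℕ) < blockOf r s (y : ℕ)) : False := by
  have step : ∀ v : Fin m, v ≤ t → ∃ w, w < t ∧ (rr v, cc w) ∈ S := by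
    intro v hv
    have hMv : ((rr v, y) : Fin n × Fin n) ∈ Mset r s n := by
      rw [St3.mem_Mset_iff]
      exact lt_of_le_of_lt (bmono (hrmono.monotone hv)) hM
    rcases St3.S_cover hS hMv with ⟨j', hj'S, hj'le⟩ | ⟨i', hi'S, hvi'⟩
    · have hx1 : ξ.1 ≤ rr v := Box.le_of_mem_IF (hrmem v)
      have hy2 : j' ≤ ξ.2 := le_trans hj'le (hyt.le.trans (Box.le_of_mem_JF (hcmem t)))
      have hj'J : j' ∈ Box.JF S ξ := (Box.cell_mem_IF_JF hS hξ hj'S hx1 hy2).2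
      obtain ⟨w, rfl⟩ := hcsurj j' hj'J
      refine ⟨w, ?_, hj'S⟩
      have hne : cc w ≠ y := fun h => hyJ (h ▸ hj'J)
      exact hcmono.lt_iff_lt.mp (lt_of_lt_of_le hyt (le_refl _) |>.trans_le (le_refl _) |> fun _ => lt_of_le_of_lt (lt_of_le_of_ne hj'le hne).le hyt)
    · exfalso
      have hx1 : ξ.1 ≤ i' := (Box.le_of_mem_IF (hrmem v)).trans hvi'
      have hy2 : y ≤ ξ.2 := hyt.le.trans (Box.le_of_mem_JF (hcmem t))
      exact hyJ (Box.cell_mem_IF_JF hS hξ hi'S hx1 hy2).2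
  classical
  set F : Fin m → Fin m := fun v => if h : v ≤ t then (step v h).choose else v with hF
  apply no_inj_Iic_Iio (t := t) (F := F)
  · intro v hv
    have h := Finset.mem_Iic.mp hv
    have := (step v h).choose_spec
    simp only [hF, dif_pos h]
    exact Finset.mem_Iio.mpr this.1
  · intro v₁ hv₁ v₂ hv₂ hFv
    have h₁ := Finset.mem_Iic.mp (Finset.mem_coe.mp hv₁)
    have h₂ := Finset.mem_Iic.mp (Finset.mem_coe.mp hv₂)
    have s₁ := (step v₁ h₁).choose_spec
    have s₂ := (step v₂ h₂).choose_spec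
    simp only [hF, dif_pos h₁, dif_pos h₂] at hFv
    rw [hFv] at s₁
    exact hrmono.injective (St3.S_col_inj hS s₁.2 s₂.2)

end Core

namespace Force
open Finset

variable {m n s : ℕ} {r : ℕ → ℕ}
variable {S : Finset (Fin n × Fin n)} (hS : IsBase (Mset r s n) S)
variable {ξ : Fin n × Fin n} (hξ : ξ ∈ S)
variable {rr cc : Fin m → Fin n}
  (hrmono : StrictMono rr) (hcmono : StrictMono cc)
  (hrmem : ∀ t, rr t ∈ Box.IF S ξ) (hcmem : ∀ t, cc t ∈ Box.JF S ξ)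
  (hrsurj : ∀ x ∈ Box.IF S ξ, ∃ t, rr t = x) (hcsurj : ∀ y ∈ Box.JF S ξ, ∃ t, cc t = y)

set_option linter.unusedSectionVars false

lemma pigeon (σ : Equiv.Perm (Fin m)) (t : Fin m) : ∃ t', t ≤ t' ∧ σ t' ≤ t := by
  by_contra hcon
  push_neg at hcon
  apply Core.no_inj_Ici_Ioi (t := t) (F := σ)
  · intro u hu
    exact Finset.mem_Ioi.mpr (hcon u (Finset.mem_Ici.mp hu))
  · exact σ.injective.injOn

include hS hξ hrmono hcmono hrmem hcmem hrsurj hcsurj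

lemma force {p q : Fin m → Fin n} (hpmono : StrictMono p) (hqmono : StrictMono q)
    (hpr : ∀ t, rr t ≤ p t) (hqc : ∀ t, q t ≤ cc t) (σ : Equiv.Perm (Fin m))
    (hcell : ∀ t, ((p t, q (σ t)) : Fin n × Fin n) ∈ Mset r s n) :
    p = rr ∧ q = cc := by
  have key : ∀ t : Fin m, blockOf r s (p t : ℕ) < blockOf r s (cc t : ℕ) ∧
      blockOf r s (rr t : ℕ) < blockOf r s (q t : ℕ) := by
    intro t
    obtain ⟨t', ht1, ht2⟩ := pigeon σ t
    have h1 : blockOf r s (p t : ℕ) ≤ blockOf r s (p t' : ℕ) :=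
      Core.bmono (hpmono.monotone ht1)
    have h2 : blockOf r s (p t' : ℕ) < blockOf r s (q (σ t') : ℕ) :=
      St3.mem_Mset_iff.mp (hcell t')
    have h3 : blockOf r s (q (σ t') : ℕ) ≤ blockOf r s (q t : ℕ) :=
      Core.bmono (hqmono.monotone ht2)
    constructor
    · exact lt_of_le_of_lt h1 (lt_of_lt_of_le h2 (h3.trans (Core.bmono (hqc t))))
    · exact lt_of_le_of_lt ((Core.bmono (hpr t)).trans h1) (lt_of_lt_of_le h2 h3)
  have hpkey : ∀ t : Fin m, (∀ u, t < u → p u = rr u) → p t = rr t := by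
    intro t ih
    rcases eq_or_lt_of_le (hpr t) with h | h
    · exact h.symm
    · exfalso
      have hpI : p t ∉ Box.IF S ξ := by
        intro hmem
        obtain ⟨u, hu⟩ := hrsurj (p t) hmem
        have htu : t < u := hrmono.lt_iff_lt.mp (hu.symm ▸ h)
        have : p u = p t := by rw [ih u htu]; exact hu
        exact absurd (hpmono.injective this) (ne_of_gt htu)
      exact Core.row_block hS hξ hrmono hcmono hrmem hcmem hrsurj hcsurj hpI h (key t).1
  have hqkey : ∀ t : Fin m, (∀ u, u < t → q u = cc u) → q t = cc t := by
    intro t ih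
    rcases eq_or_lt_of_le (hqc t) with h | h
    · exact h
    · exfalso
      have hqJ : q t ∉ Box.JF S ξ := by
        intro hmem
        obtain ⟨u, hu⟩ := hcsurj (q t) hmem
        have htu : u < t := hcmono.lt_iff_lt.mp (hu.symm ▸ h)
        have : q u = q t := by rw [ih u htu]; exact hu
        exact absurd (hqmono.injective this) (ne_of_lt htu)
      exact Core.col_block hS hξ hrmono hcmono hrmem hcmem hrsurj hcsurj hqJ h (key t).2
  constructor
  · funext t
    have hall : ∀ d : ℕ, ∀ t : Fin m, m ≤ (t : ℕ) + d + 1 → p t = rr t := by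
      intro d
      induction d with
      | zero =>
        intro t ht
        apply hpkey
        intro u hu
        exact absurd u.isLt (by have := Fin.lt_def.mp hu; omega)
      | succ d ih =>
        intro t ht
        apply hpkey
        intro u hu
        exact ih u (by have := (Fin.lt_def.mp hu); omega)
    exact hall m t (by omega)
  · funext t
    have hall : ∀ d : ℕ, ∀ t : Fin m, (t : ℕ) ≤ d → q t = cc t := by
      intro d
      induction d with
      | zero =>
        intro t ht
        apply hqkey
        intro u hu
        exact absurd (Fin.lt_def.mp hu) (by omega)

      | succ d ih =>
        intro t ht
        apply hqkey
        intro u hu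
        exact ih u (by have := (Fin.lt_def.mp hu); omega)
    exact hall m t (by omega)

end Force

namespace Srt
open Finset

variable {m n : ℕ}

lemma sort_lower {rr : Fin m → Fin n} (hr : StrictMono rr) {f : Fin m → Fin n}
    (hf : Function.Injective f) (hfr : ∀ t, rr t ≤ f t) :
    ∃ (p : Fin m → Fin n) (e : Equiv.Perm (Fin m)),
      StrictMono p ∧ (∀ t, rr t ≤ p t) ∧ ∀ t, f t = p (e t) := by
  classical
  set F : Finset (Fin n) := Finset.univ.image f with hFdef
  have hFcard : F.card = m := by
    rw [hFdef, Finset.card_image_of_injective _ hf, Finset.card_univ, Fintype.card_fin]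
  set p : Fin m → Fin n := fun t => (F.orderIsoOfFin hFcard t : Fin n) with hpdef
  have hpmono : StrictMono p := fun a b hab => (F.orderIsoOfFin hFcard).strictMono hab
  have hmemF : ∀ t, f t ∈ F := fun t => Finset.mem_image.mpr ⟨t, Finset.mem_univ t, rfl⟩
  set e0 : Fin m → Fin m := fun t => (F.orderIsoOfFin hFcard).symm ⟨f t, hmemF t⟩ with he0
  have he0inj : Function.Injective e0 := by
    intro a b hab
    have h2 : (⟨f a, hmemF a⟩ : {x // x ∈ F}) = ⟨f b, hmemF b⟩ :=
      (F.orderIsoOfFin hFcard).symm.injective (by simpa [he0] using hab)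
    exact hf (congrArg Subtype.val h2)
  have he0bij : Function.Bijective e0 := Finite.injective_iff_bijective.mp he0inj
  refine ⟨p, Equiv.ofBijective e0 he0bij, hpmono, ?_, ?_⟩
  · intro t
    by_contra hlt
    push_neg at hlt
    -- p t < rr t; count elements of F below rr t
    have hstep : ∀ u : Fin m, u ≤ t → ∃ w, w < t ∧ f w = p u := by
      intro u hu
      have hpu : p u ∈ F := (F.orderIsoOfFin hFcard u).2
      obtain ⟨w, _, hw⟩ := Finset.mem_image.mp hpu
      refine ⟨w, ?_, hw⟩
      have h1 : rr w ≤ p u := hw ▸ hfr w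
      have h2 : p u ≤ p t := hpmono.monotone hu
      exact hr.lt_iff_lt.mp (lt_of_le_of_lt (h1.trans h2) hlt)
    set G : Fin m → Fin m := fun u => if h : u ≤ t then (hstep u h).choose else u with hG
    apply Core.no_inj_Iic_Iio (t := t) (F := G)
    · intro u hu
      have h := Finset.mem_Iic.mp hu
      simp only [hG, dif_pos h]
      exact Finset.mem_Iio.mpr (hstep u h).choose_spec.1
    · intro u₁ hu₁ u₂ hu₂ hGu
      have h₁ := Finset.mem_Iic.mp (Finset.mem_coe.mp hu₁)
      have h₂ := Finset.mem_Iic.mp (Finset.mem_coe.mp hu₂)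
      have s₁ := (hstep u₁ h₁).choose_spec
      have s₂ := (hstep u₂ h₂).choose_spec
      simp only [hG, dif_pos h₁, dif_pos h₂] at hGu
      rw [hGu] at s₁
      have : p u₁ = p u₂ := s₁.2.symm.trans s₂.2
      exact hpmono.injective this
  · intro t
    simp only [Equiv.ofBijective_apply, he0, hpdef]
    rw [OrderIso.apply_symm_apply]

lemma sort_upper {cc : Fin m → Fin n} (hc : StrictMono cc) {f : Fin m → Fin n}
    (hf : Function.Injective f) (hfc : ∀ t, f t ≤ cc t) :
    ∃ (q : Fin m → Fin n) (e : Equiv.Perm (Fin m)),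
      StrictMono q ∧ (∀ t, q t ≤ cc t) ∧ ∀ t, f t = q (e t) := by
  classical
  set F : Finset (Fin n) := Finset.univ.image f with hFdef
  have hFcard : F.card = m := by
    rw [hFdef, Finset.card_image_of_injective _ hf, Finset.card_univ, Fintype.card_fin]
  set q : Fin m → Fin n := fun t => (F.orderIsoOfFin hFcard t : Fin n) with hqdef
  have hqmono : StrictMono q := fun a b hab => (F.orderIsoOfFin hFcard).strictMono hab
  have hmemF : ∀ t, f t ∈ F := fun t => Finset.mem_image.mpr ⟨t, Finset.mem_univ t, rfl⟩
  set e0 : Fin m → Fin m := fun t => (F.orderIsoOfFin hFcard).symm ⟨f t, hmemF t⟩ with he0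
  have he0inj : Function.Injective e0 := by
    intro a b hab
    have h2 : (⟨f a, hmemF a⟩ : {x // x ∈ F}) = ⟨f b, hmemF b⟩ :=
      (F.orderIsoOfFin hFcard).symm.injective (by simpa [he0] using hab)
    exact hf (congrArg Subtype.val h2)
  have he0bij : Function.Bijective e0 := Finite.injective_iff_bijective.mp he0inj
  refine ⟨q, Equiv.ofBijective e0 he0bij, hqmono, ?_, ?_⟩
  · intro t
    by_contra hlt
    push_neg at hlt
    have hstep : ∀ u : Fin m, t ≤ u → ∃ w, t < w ∧ f w = q u := by
      intro u hu
      have hqu : q u ∈ F := (F.orderIsoOfFin hFcard u).2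
      obtain ⟨w, _, hw⟩ := Finset.mem_image.mp hqu
      refine ⟨w, ?_, hw⟩
      have h1 : q u ≤ cc w := hw ▸ hfc w
      have h2 : q t ≤ q u := hqmono.monotone hu
      exact hc.lt_iff_lt.mp (lt_of_lt_of_le hlt (h2.trans h1))
    set G : Fin m → Fin m := fun u => if h : t ≤ u then (hstep u h).choose else u with hG
    apply Core.no_inj_Ici_Ioi (t := t) (F := G)
    · intro u hu
      have h := Finset.mem_Ici.mp hu
      simp only [hG, dif_pos h]
      exact Finset.mem_Ioi.mpr (hstep u h).choose_spec.1
    · intro u₁ hu₁ u₂ hu₂ hGu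
      have h₁ := Finset.mem_Ici.mp (Finset.mem_coe.mp hu₁)
      have h₂ := Finset.mem_Ici.mp (Finset.mem_coe.mp hu₂)
      have s₁ := (hstep u₁ h₁).choose_spec
      have s₂ := (hstep u₂ h₂).choose_spec
      simp only [hG, dif_pos h₁, dif_pos h₂] at hGu
      rw [hGu] at s₁
      exact hqmono.injective (s₁.2.symm.trans s₂.2)
  · intro t
    simp only [Equiv.ofBijective_apply, he0, hqdef]
    rw [OrderIso.apply_symm_apply]

lemma perm_ge_eq_id {e : Equiv.Perm (Fin m)} (he : ∀ t, t ≤ e t) : ∀ t, e t = t := by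
  have hall : ∀ d : ℕ, ∀ t : Fin m, m ≤ (t : ℕ) + d + 1 → e t = t := by
    intro d
    induction d with
    | zero =>
      intro t ht
      rcases eq_or_lt_of_le (he t) with h | h
      · exact h.symm
      · exact absurd (e t).isLt (by have := Fin.lt_def.mp h; omega)
    | succ d ih =>
      intro t ht
      rcases eq_or_lt_of_le (he t) with h | h
      · exact h.symm
      · have h2 : e (e t) = e t := ih (e t) (by have := Fin.lt_def.mp h; omega)
        exact e.injective h2
  intro t
  exact hall m t (by omega)

lemma perm_le_eq_id {e : Equiv.Perm (Fin m)} (he : ∀ t, e t ≤ t) : ∀ t, e t = t := by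
  have hall : ∀ d : ℕ, ∀ t : Fin m, (t : ℕ) ≤ d → e t = t := by
    intro d
    induction d with
    | zero =>
      intro t ht
      exact le_antisymm (he t) (by rw [Fin.le_def]; omega)
    | succ d ih =>
      intro t ht
      rcases eq_or_lt_of_le (he t) with h | h
      · exact h
      · have h2 : e (e t) = e t := ih (e t) (by have := Fin.lt_def.mp h; omega)
        exact e.injective h2
  intro t
  exact hall m t (by omega)

end Srt

namespace Alg
open Finset Matrix

lemma det_mul_expand {m' n' : ℕ} {R : Type} [CommRing R] (P : Matrix (Fin m') (Fin n') R)
    (N : Matrix (Fin n') (Fin m') R) :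
    (P * N).det = ∑ f ∈ Fintype.piFinset (fun _ : Fin m' => (Finset.univ : Finset (Fin n'))),
      (∏ t, P t (f t)) * (N.submatrix f id).det := by
  classical
  have h0 : (P * N).det = Matrix.detRowAlternating (R := R) (n := Fin m')
      (fun t => ∑ p ∈ Finset.univ, P t p • N p) := by
    have : ((P * N : Matrix (Fin m') (Fin m') R) : Matrix (Fin m') (Fin m') R) =
        Matrix.of (fun t => ∑ p ∈ Finset.univ, P t p • N p) := by
      ext t j
      simp [Matrix.mul_apply, Finset.sum_apply]
    rw [show (P * N).det = Matrix.detRowAlternating (P * N) from rfl, this]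
    rfl
  rw [h0, ← AlternatingMap.coe_multilinearMap (Matrix.detRowAlternating (R := R) (n := Fin m')),
    (Matrix.detRowAlternating (R := R) (n := Fin m')).toMultilinearMap.map_sum_finset
      (fun (t : Fin m') (p : Fin n') => P t p • N p) (fun _ => Finset.univ)]
  apply Finset.sum_congr rfl
  intro f _
  have := (Matrix.detRowAlternating (R := R) (n := Fin m')).toMultilinearMap.map_smul_univ
    (fun t => P t (f t)) (fun t => N (f t))
  rw [show ((Matrix.detRowAlternating (R := R) (n := Fin m')).toMultilinearMap
      fun t => P t (f t) • N (f t)) = ((Matrix.detRowAlternating (R := R) (n := Fin m')).toMultilinearMap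
      fun t => (fun u => P u (f u)) t • (fun u => N (f u)) t) from rfl, this]
  rw [smul_eq_mul]
  rfl

lemma det_mul_mul_expand {m' n' : ℕ} {R : Type} [CommRing R] (P : Matrix (Fin m') (Fin n') R)
    (X : Matrix (Fin n') (Fin n') R) (Q : Matrix (Fin n') (Fin m') R) :
    (P * X * Q).det = ∑ f ∈ Fintype.piFinset (fun _ : Fin m' => (Finset.univ : Finset (Fin n'))),
      (∏ t, P t (f t)) *
        (∑ h ∈ Fintype.piFinset (fun _ : Fin m' => (Finset.univ : Finset (Fin n'))),
          (∏ u, Q (h u) u) * (X.submatrix f h).det) := by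
  classical
  rw [Matrix.mul_assoc, det_mul_expand]
  apply Finset.sum_congr rfl
  intro f _
  congr 1
  have h1 : (X * Q).submatrix f id = (X.submatrix f id) * Q := by
    ext t j
    simp [Matrix.mul_apply, Matrix.submatrix_apply]
  rw [h1, ← Matrix.det_transpose ((X.submatrix f id) * Q), Matrix.transpose_mul,
    det_mul_expand]
  apply Finset.sum_congr rfl
  intro h _
  congr 1
  have h2 : ((X.submatrix f id)ᵀ.submatrix h id) = (X.submatrix f h)ᵀ := by
    ext u v
    simp [Matrix.submatrix_apply, Matrix.transpose_apply]
  rw [h2, Matrix.det_transpose]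

end Alg


namespace Tri
open Matrix

variable {K : Type} [Field K] {n : ℕ} {g : Matrix (Fin n) (Fin n) K}

lemma unitri_blockTriangular (hg : IsUnitriangular g) : g.BlockTriangular id :=
  fun i j h => hg.2 i j h

lemma unitri_det (hg : IsUnitriangular g) : g.det = 1 := by
  rw [Matrix.det_of_upperTriangular (unitri_blockTriangular hg)]
  simp [hg.1]

lemma unitri_inv (hg : IsUnitriangular g) : IsUnitriangular g⁻¹ := by
  have hdet : IsUnit g.det := by rw [unitri_det hg]; exact isUnit_one
  have : Invertible g := g.invertibleOfIsUnitDet hdet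
  have hbt : g⁻¹.BlockTriangular id :=
    Matrix.blockTriangular_inv_of_blockTriangular (unitri_blockTriangular hg)
  constructor
  · intro i
    have hmul : g * g⁻¹ = 1 := Matrix.mul_nonsing_inv g hdet
    have hentry : (g * g⁻¹) i i = 1 := by rw [hmul]; simp
    rw [Matrix.mul_apply] at hentry
    rw [Finset.sum_eq_single i ?h1 ?h2] at hentry
    · rwa [hg.1 i, one_mul] at hentry
    · intro p _ hp
      rcases lt_or_gt_of_ne hp with h | h
      · rw [hg.2 i p h, zero_mul]
      · rw [hbt (show id i < id p from h), mul_zero]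
    · intro h
      exact absurd (Finset.mem_univ i) h
  · intro i j hij
    exact hbt hij

end Tri

namespace Main
open Finset Matrix

variable {K : Type} [Field K] {n s : ℕ} {r : ℕ → ℕ}

lemma Y_offM {g : Matrix (Fin n) (Fin n) K} (hg : IsUnitriangular g) {i j : Fin n}
    (hij : (i, j) ∉ Mset r s n) :
    (((g⁻¹).map fun a => (MvPolynomial.C a : Rpoly K r s n)) * Xmat K r s n *
      (g.map fun a => (MvPolynomial.C a : Rpoly K r s n))) i j = 0 := by
  rw [Matrix.mul_apply]
  apply Finset.sum_eq_zero
  intro q _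
  by_cases hq : j < q
  · rw [Matrix.map_apply, hg.2 q j hq, map_zero, mul_zero]
  · push_neg at hq
    suffices hPX : (((g⁻¹).map fun a => (MvPolynomial.C a : Rpoly K r s n)) * Xmat K r s n) i q = 0 by
      rw [hPX, zero_mul]
    rw [Matrix.mul_apply]
    apply Finset.sum_eq_zero
    intro p _
    by_cases hp : p < i
    · rw [Matrix.map_apply, (Tri.unitri_inv hg).2 i p hp, map_zero, zero_mul]
    · push_neg at hp
      suffices hX : Xmat K r s n p q = 0 by rw [hX, mul_zero]
      rw [Xmat, Matrix.of_apply, dif_neg]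
      intro hpq
      apply hij
      rw [St3.mem_Mset_iff] at hpq ⊢
      calc blockOf r s (i : ℕ) ≤ blockOf r s (p : ℕ) := Core.bmono hp
        _ < blockOf r s (q : ℕ) := hpq
        _ ≤ blockOf r s (j : ℕ) := Core.bmono hq

lemma Xmat_map_adjAct {g : Matrix (Fin n) (Fin n) K} (hg : IsUnitriangular g) :
    (Xmat K r s n).map (adjAct K r s n g) =
      ((g⁻¹).map fun a => (MvPolynomial.C a : Rpoly K r s n)) * Xmat K r s n *
        (g.map fun a => (MvPolynomial.C a : Rpoly K r s n)) := by
  refine Matrix.ext fun i j => ?_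
  rw [Matrix.map_apply]
  by_cases hij : (i, j) ∈ Mset r s n
  · rw [show Xmat K r s n i j = MvPolynomial.X ⟨(i, j), hij⟩ from dif_pos hij]
    exact MvPolynomial.aeval_X (R := K)
      (fun ζ : {p : Fin n × Fin n // p ∈ Mset r s n} =>
        (((g⁻¹).map fun a => (MvPolynomial.C a : Rpoly K r s n)) * Xmat K r s n *
          (g.map fun a => (MvPolynomial.C a : Rpoly K r s n))) ζ.1.1 ζ.1.2)
      ⟨(i, j), hij⟩
  · rw [show Xmat K r s n i j = 0 from dif_neg hij, map_zero, Y_offM hg hij]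

lemma det_submatrix_zero_of_no_perm {m : ℕ} {f h : Fin m → Fin n}
    (hno : ¬∃ σ : Equiv.Perm (Fin m), ∀ t, ((f t, h (σ t)) : Fin n × Fin n) ∈ Mset r s n) :
    ((Xmat K r s n).submatrix f h).det = 0 := by
  rw [Matrix.det_apply]
  apply Finset.sum_eq_zero
  intro σ _
  push_neg at hno
  obtain ⟨t, ht⟩ := hno σ⁻¹
  have : ((Xmat K r s n).submatrix f h) (σ (σ⁻¹ t)) (σ⁻¹ t) = 0 := by
    rw [show σ (σ⁻¹ t) = t from σ.apply_symm_apply t]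
    exact dif_neg ht
  have hz : (∏ i : Fin m, (Xmat K r s n).submatrix f h (σ i) i) = 0 :=
    Finset.prod_eq_zero (Finset.mem_univ (σ⁻¹ t)) this
  rw [hz, smul_zero]

end Main


namespace Main2
open Finset Matrix

variable {K : Type} [Field K] {m n s : ℕ} {r : ℕ → ℕ}
variable {S : Finset (Fin n × Fin n)} (hS : IsBase (Mset r s n) S)
variable {ξ : Fin n × Fin n} (hξ : ξ ∈ S)
variable {rr cc : Fin m → Fin n}
  (hrmono : StrictMono rr) (hcmono : StrictMono cc)
  (hrmem : ∀ t, rr t ∈ Box.IF S ξ) (hcmem : ∀ t, cc t ∈ Box.JF S ξ)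
  (hrsurj : ∀ x ∈ Box.IF S ξ, ∃ t, rr t = x) (hcsurj : ∀ y ∈ Box.JF S ξ, ∃ t, cc t = y)

set_option linter.unusedSectionVars false

include hS hξ hrmono hcmono hrmem hcmem hrsurj hcsurj

lemma main_vanish {f h : Fin m → Fin n}
    (hinjf : Function.Injective f) (hinjh : Function.Injective h)
    (hge : ∀ t, rr t ≤ f t) (hle : ∀ u, h u ≤ cc u)
    (hdet : ((Xmat K r s n).submatrix f h).det ≠ 0) : f = rr ∧ h = cc := by
  have hex : ∃ σ : Equiv.Perm (Fin m), ∀ t, ((f t, h (σ t)) : Fin n × Fin n) ∈ Mset r s n := by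
    by_contra hno
    exact hdet (Main.det_submatrix_zero_of_no_perm hno)
  obtain ⟨σ, hσ⟩ := hex
  obtain ⟨p, e, hpmono, hpr, hfe⟩ := Srt.sort_lower hrmono hinjf hge
  obtain ⟨q, d, hqmono, hqc, hhd⟩ := Srt.sort_upper hcmono hinjh hle
  set σ'' : Equiv.Perm (Fin m) := (e.symm.trans σ).trans d with hσ''
  have hcell : ∀ t, ((p t, q (σ'' t)) : Fin n × Fin n) ∈ Mset r s n := by
    intro t
    have := hσ (e.symm t)
    rw [hfe (e.symm t), hhd (σ (e.symm t))] at this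
    simpa [hσ'', Equiv.trans_apply] using this
  obtain ⟨hpe, hqe⟩ := Force.force hS hξ hrmono hcmono hrmem hcmem hrsurj hcsurj
    hpmono hqmono hpr hqc σ'' hcell
  subst hpe hqe
  have he_id : ∀ t, e t = t := by
    apply Srt.perm_ge_eq_id
    intro t
    exact hrmono.le_iff_le.mp ((hfe t) ▸ hge t)
  have hd_id : ∀ t, d t = t := by
    apply Srt.perm_le_eq_id
    intro t
    exact hcmono.le_iff_le.mp ((hhd t) ▸ hle t)
  constructor
  · funext t; rw [hfe t, he_id t]
  · funext t; rw [hhd t, hd_id t]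

end Main2

namespace Alg2
open Matrix

lemma submatrix_mul_mul {m' n' : ℕ} {R : Type} [CommRing R] (P : Matrix (Fin n') (Fin n') R)
    (X : Matrix (Fin n') (Fin n') R) (Q : Matrix (Fin n') (Fin n') R)
    (rr cc : Fin m' → Fin n') :
    (P * X * Q).submatrix rr cc = (P.submatrix rr id) * X * (Q.submatrix id cc) := rfl

end Alg2

/-- for every `ξ` in the base `S`, the minor `M_ξ` is invariant under the
adjoint action of the upper unitriangular group `N` on `K[m]`. -/
theorem statement3 (K : Type) [Field K] [IsAlgClosed K] [CharZero K]
    (n s : ℕ) (r : ℕ → ℕ) (hpos : ∀ k < s, 0 < r k) (hsum : Rsum r s = n)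
    (S : Finset (Fin n × Fin n)) (hS : IsBase (Mset r s n) S)
    (ξ : Fin n × Fin n) (hξ : ξ ∈ S)
    (g : Matrix (Fin n) (Fin n) K) (hg : IsUnitriangular g) :
    adjAct K r s n g (Mminor K r s n S ξ) = Mminor K r s n S ξ := by
  classical
  have hcard : (Box.JF S ξ).card = (Box.IF S ξ).card := Box.card_JF_eq hS hξ
  set m := (Box.IF S ξ).card with hm
  let rr : Fin m → Fin n := fun t => ((Box.IF S ξ).orderIsoOfFin rfl t : Fin n)
  let cc : Fin m → Fin n := fun t => ((Box.JF S ξ).orderIsoOfFin hcard t : Fin n)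
  have hrmono : StrictMono rr := fun a b hab =>
    Subtype.coe_lt_coe.mpr (((Box.IF S ξ).orderIsoOfFin rfl).strictMono hab)
  have hcmono : StrictMono cc := fun a b hab =>
    Subtype.coe_lt_coe.mpr (((Box.JF S ξ).orderIsoOfFin hcard).strictMono hab)
  have hrmem : ∀ t, rr t ∈ Box.IF S ξ := fun t => ((Box.IF S ξ).orderIsoOfFin rfl t).2
  have hcmem : ∀ t, cc t ∈ Box.JF S ξ := fun t => ((Box.JF S ξ).orderIsoOfFin hcard t).2
  have hrsurj : ∀ x ∈ Box.IF S ξ, ∃ t, rr t = x := by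
    intro x hx
    refine ⟨((Box.IF S ξ).orderIsoOfFin rfl).symm ⟨x, hx⟩, ?_⟩
    show (((Box.IF S ξ).orderIsoOfFin rfl) (((Box.IF S ξ).orderIsoOfFin rfl).symm ⟨x, hx⟩) : Fin n) = x
    rw [OrderIso.apply_symm_apply]
  have hcsurj : ∀ y ∈ Box.JF S ξ, ∃ t, cc t = y := by
    intro y hy
    refine ⟨((Box.JF S ξ).orderIsoOfFin hcard).symm ⟨y, hy⟩, ?_⟩
    show (((Box.JF S ξ).orderIsoOfFin hcard) (((Box.JF S ξ).orderIsoOfFin hcard).symm ⟨y, hy⟩) : Fin n) = y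
    rw [OrderIso.apply_symm_apply]
  have hMm : Mminor K r s n S ξ = ((Xmat K r s n).submatrix rr cc).det := by
    show minorDet (Xmat K r s n) _ _ = _
    have hc' : (insert ξ.2 (Finset.image Prod.snd (Finset.filter (fun p => ξ.1 < p.1 ∧ p.2 < ξ.2) S))).card =
        (insert ξ.1 (Finset.image Prod.fst (Finset.filter (fun p => ξ.1 < p.1 ∧ p.2 < ξ.2) S))).card := hcard
    rw [minorDet, dif_pos hc']
    rfl
  rw [hMm, AlgHom.map_det, AlgHom.mapMatrix_apply, ← Matrix.submatrix_map, Main.Xmat_map_adjAct hg,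
    Alg2.submatrix_mul_mul, Alg.det_mul_mul_expand]
  have hginv : IsUnitriangular g⁻¹ := Tri.unitri_inv hg
  set X := Xmat K r s n with hX
  set P := ((g⁻¹).map fun a => (MvPolynomial.C a : Rpoly K r s n)).submatrix rr id with hP
  set Q := ((g).map fun a => (MvPolynomial.C a : Rpoly K r s n)).submatrix id cc with hQ
  have hPentry : ∀ t (x : Fin n), P t x = MvPolynomial.C (g⁻¹ (rr t) x) := by
    intro t x; rw [hP]; rfl
  have hQentry : ∀ (x : Fin n) u, Q x u = MvPolynomial.C (g x (cc u)) := by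
    intro x u; rw [hQ]; rfl
  -- inner-sum vanishing, for any injective, bounded f
  have inner_zero : ∀ f : Fin m → Fin n, (∀ t, rr t ≤ f t) → Function.Injective f →
      ∀ h : Fin m → Fin n, (f = rr → h ≠ cc) →
      (∏ u, Q (h u) u) * ((X.submatrix f h).det) = 0 := by
    intro f hge hinjf h hne
    by_cases hle : ∀ u, h u ≤ cc u
    · by_cases hinjh : Function.Injective h
      · by_cases hdet : (X.submatrix f h).det = 0
        · rw [hdet, mul_zero]
        · obtain ⟨hfr, hhc⟩ := Main2.main_vanish hS hξ hrmono hcmono hrmem hcmem hrsurj hcsurj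
            hinjf hinjh hge hle hdet
          exact absurd hhc (hne hfr)
      · have : ∃ u₁ u₂, u₁ ≠ u₂ ∧ h u₁ = h u₂ := by
          rw [Function.not_injective_iff] at hinjh
          obtain ⟨u₁, u₂, hh, hne'⟩ := hinjh
          exact ⟨u₁, u₂, hne', hh⟩
        obtain ⟨u₁, u₂, hneu, hhu⟩ := this
        have hdet : (X.submatrix f h).det = 0 := by
          apply Matrix.det_zero_of_column_eq hneu
          intro w
          simp [Matrix.submatrix_apply, hhu]
        rw [hdet, mul_zero]
    · push_neg at hle
      obtain ⟨u, hu⟩ := hle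
      have hzero : Q (h u) u = 0 := by
        rw [hQentry, hg.2 (h u) (cc u) hu, map_zero]
      have hpz : (∏ w, Q (h w) w) = 0 := Finset.prod_eq_zero (Finset.mem_univ u) hzero
      rw [hpz, zero_mul]
  rw [Finset.sum_eq_single_of_mem rr
    (Fintype.mem_piFinset.mpr fun _ => Finset.mem_univ _) ?outer]
  rw [Finset.sum_eq_single_of_mem cc
    (Fintype.mem_piFinset.mpr fun _ => Finset.mem_univ _) ?inner]
  · -- main term
    have h1 : (∏ t, P t (rr t)) = 1 := by
      rw [Finset.prod_congr rfl (fun t _ => by rw [hPentry t (rr t), hginv.1 (rr t), map_one])]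
      exact Finset.prod_const_one
    have h2 : (∏ u, Q (cc u) u) = 1 := by
      rw [Finset.prod_congr rfl (fun u _ => by rw [hQentry (cc u) u, hg.1 (cc u), map_one])]
      exact Finset.prod_const_one
    rw [h1, h2, one_mul, one_mul]
  case inner =>
    intro h _ hne
    exact inner_zero rr (fun t => le_refl _) hrmono.injective h (fun _ => hne)
  case outer =>
    intro f _ hne
    by_cases hge : ∀ t, rr t ≤ f t
    · by_cases hinjf : Function.Injective f
      · have : ∀ h ∈ Fintype.piFinset (fun _ : Fin m => (Finset.univ : Finset (Fin n))),
            (∏ u, Q (h u) u) * ((X.submatrix f h).det) = 0 := by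
          intro h _
          exact inner_zero f hge hinjf h (fun heq => absurd heq hne)
        rw [Finset.sum_eq_zero this, mul_zero]
      · have hdetall : ∀ h : Fin m → Fin n, (X.submatrix f h).det = 0 := by
          intro h
          rw [Function.not_injective_iff] at hinjf
          obtain ⟨t₁, t₂, hft, hnet⟩ := hinjf
          apply Matrix.det_zero_of_row_eq hnet
          funext w
          simp [Matrix.submatrix_apply, hft]
        have : ∀ h ∈ Fintype.piFinset (fun _ : Fin m => (Finset.univ : Finset (Fin n))),
            (∏ u, Q (h u) u) * ((X.submatrix f h).det) = 0 := by
          intro h _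
          rw [hdetall h, mul_zero]
        rw [Finset.sum_eq_zero this, mul_zero]
    · push_neg at hge
      obtain ⟨t, ht⟩ := hge
      have hzero : P t (f t) = 0 := by
        rw [hPentry, hginv.2 (rr t) (f t) ht, map_zero]
      have hpz : (∏ w, P w (f w)) = 0 := Finset.prod_eq_zero (Finset.mem_univ t) hzero
      rw [hpz, zero_mul]
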